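/- Let M₀ be an s×m real matrix with all entries in {0,1} that is injective on binary vectors (for binary x, x' ∈ {0,1}^m, M₀x = M₀x' implies x = x'). Let H be a Hadamard matrix of order h ≥ 1 (entries in {−1,1}, Hᵀ H = h·I). Then there exists a decoding function Dec from ℝ^{h·s} to binary vectors in {0,1}^{h·m} such that for every binary x ∈ {0,1}^{h·m} and every noise vector n ∈ ℝ^{h·s}, the Hamming distance between Dec((H ⊗ M₀)·x + n) and x is at most 4·m·‖n‖₂²/h. -/

import Mathlib

open Matrix Kronecker Finset

open Classical in
noncomputable def dec0 {s m : ℕ} (M₀ : Matrix (Fin s) (Fin m) ℝ) (z : Fin s → ℝ) : Fin m → ℝ :=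
  if hz : ∃ u : Fin m → ℝ, (∀ i, u i = 0 ∨ u i = 1) ∧
      ∑ j, (M₀.mulVec u j - z j) ^ 2 < 1/4
  then hz.choose else 0

lemma dec0_binary {s m : ℕ} (M₀ : Matrix (Fin s) (Fin m) ℝ) (z : Fin s → ℝ) (i : Fin m) :
    dec0 M₀ z i = 0 ∨ dec0 M₀ z i = 1 := by
  unfold dec0
  split
  · next hz => exact hz.choose_spec.1 i
  · exact Or.inl rfl

lemma mulVec_int {s m : ℕ} (M₀ : Matrix (Fin s) (Fin m) ℝ)
    (hM₀ : ∀ i j, M₀ i j = 0 ∨ M₀ i j = 1)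
    (u : Fin m → ℝ) (hu : ∀ i, u i = 0 ∨ u i = 1) (j : Fin s) :
    ∃ k : ℤ, M₀.mulVec u j = (k : ℝ) := by
  refine ⟨∑ i, if M₀ j i = 1 ∧ u i = 1 then 1 else 0, ?_⟩
  rw [Matrix.mulVec, dotProduct]
  push_cast
  refine Finset.sum_congr rfl fun i _ => ?_
  rcases hM₀ j i with h1 | h1 <;> rcases hu i with h2 | h2 <;> simp [h1, h2]

lemma dec0_close_eq {s m : ℕ} (M₀ : Matrix (Fin s) (Fin m) ℝ)
    (hM₀ : ∀ i j, M₀ i j = 0 ∨ M₀ i j = 1)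
    (hinj : ∀ x x' : Fin m → ℝ, (∀ i, x i = 0 ∨ x i = 1) → (∀ i, x' i = 0 ∨ x' i = 1) →
      M₀.mulVec x = M₀.mulVec x' → x = x')
    (z : Fin s → ℝ) (x : Fin m → ℝ) (hx : ∀ i, x i = 0 ∨ x i = 1)
    (hclose : ∑ j, (M₀.mulVec x j - z j) ^ 2 < 1/4) :
    dec0 M₀ z = x := by
  have hex : ∃ u : Fin m → ℝ, (∀ i, u i = 0 ∨ u i = 1) ∧
      ∑ j, (M₀.mulVec u j - z j) ^ 2 < 1/4 := ⟨x, hx, hclose⟩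
  have key : ∀ u : Fin m → ℝ, (∀ i, u i = 0 ∨ u i = 1) →
      ∑ j, (M₀.mulVec u j - z j) ^ 2 < 1/4 → u = x := by
    intro u hu hcu
    apply hinj u x hu hx
    funext j
    have h1 : (M₀.mulVec u j - z j) ^ 2 < 1/4 :=
      lt_of_le_of_lt (Finset.single_le_sum (f := fun j => (M₀.mulVec u j - z j) ^ 2) (fun j _ => sq_nonneg _) (mem_univ j)) hcu
    have h2 : (M₀.mulVec x j - z j) ^ 2 < 1/4 :=
      lt_of_le_of_lt (Finset.single_le_sum (f := fun j => (M₀.mulVec x j - z j) ^ 2) (fun j _ => sq_nonneg _) (mem_univ j)) hclose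
    obtain ⟨a, ha⟩ := mulVec_int M₀ hM₀ u hu j
    obtain ⟨b, hb⟩ := mulVec_int M₀ hM₀ x hx j
    rw [ha, hb]
    have hd : ((a : ℝ) - b) = (M₀.mulVec u j - z j) - (M₀.mulVec x j - z j) := by
      rw [← ha, ← hb]; ring
    have hsq : ((a : ℝ) - b) ^ 2 < 1 := by
      rw [hd]
      nlinarith [sq_nonneg (M₀.mulVec u j - z j + (M₀.mulVec x j - z j))]
    have hab : a = b := by
      by_contra hne
      have h3 : 1 ≤ |a - b| := Int.one_le_abs (sub_ne_zero.mpr hne)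
      have h4 : (1:ℝ) ≤ ((a:ℝ) - b)^2 := by
        have : ((1:ℤ):ℝ) ≤ (|a - b| : ℝ) := by exact_mod_cast h3
        push_cast at this
        nlinarith [abs_nonneg ((a:ℝ) - b), sq_abs ((a:ℝ) - b), this]
      linarith
    rw [hab]
  unfold dec0
  rw [dif_pos hex]
  exact key _ hex.choose_spec.1 hex.choose_spec.2

/-- Correctness of the two-step (deconstruction + rounding) decoder for the
basic construction: if `M₀` is a `{0,1}`-matrix injective on binary vectors and `H` is a
Hadamard matrix of order `h ≥ 1`, then the Kronecker product `H ⊗ M₀` admits a decoder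
mapping any noisy observation to a binary vector that differs from the true binary data in
at most `4·m·‖n‖₂²/h` coordinates. -/
theorem stmt_13 {s m h : ℕ} (hh : 1 ≤ h)
    (M₀ : Matrix (Fin s) (Fin m) ℝ)
    (hM₀ : ∀ i j, M₀ i j = 0 ∨ M₀ i j = 1)
    (hinj : ∀ x x' : Fin m → ℝ, (∀ i, x i = 0 ∨ x i = 1) → (∀ i, x' i = 0 ∨ x' i = 1) →
      M₀.mulVec x = M₀.mulVec x' → x = x')
    (H : Matrix (Fin h) (Fin h) ℝ)
    (hHe : ∀ i j, H i j = -1 ∨ H i j = 1)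
    (hH : Hᵀ * H = (h : ℝ) • 1) :
    ∃ Dec : (Fin h × Fin s → ℝ) → (Fin h × Fin m → ℝ),
      (∀ y i, Dec y i = 0 ∨ Dec y i = 1) ∧
      ∀ x : Fin h × Fin m → ℝ, (∀ i, x i = 0 ∨ x i = 1) →
        ∀ n : Fin h × Fin s → ℝ,
          ((univ.filter fun i => Dec ((H ⊗ₖ M₀).mulVec x + n) i ≠ x i).card : ℝ) ≤
            4 * m * (∑ j, (n j) ^ 2) / h := by
  classical
  have hhpos : (0:ℝ) < h := by exact_mod_cast hh
  have hh0 : (h:ℝ) ≠ 0 := ne_of_gt hhpos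
  refine ⟨fun y p => dec0 M₀ (fun j => (h:ℝ)⁻¹ * ∑ l, H l p.1 * y (l, j)) p.2,
    fun y p => dec0_binary M₀ _ p.2, ?_⟩
  intro x hx n
  set y : Fin h × Fin s → ℝ := (H ⊗ₖ M₀).mulVec x + n with hy
  set e : Fin h → Fin s → ℝ := fun k j => (h:ℝ)⁻¹ * ∑ l, H l k * n (l, j) with he
  -- column orthogonality
  have hHcol : ∀ k k' : Fin h, ∑ l, H l k * H l k' = if k = k' then (h:ℝ) else 0 := by
    intro k k'
    have := congrFun (congrFun hH k) k'
    simpa [Matrix.mul_apply, Matrix.transpose_apply, Matrix.smul_apply, Matrix.one_apply,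
      mul_ite, mul_one, mul_zero] using this
  -- row orthogonality
  have hinvH : Hᵀ * ((h:ℝ)⁻¹ • H) = 1 := by
    rw [Matrix.mul_smul, hH, smul_smul, inv_mul_cancel₀ hh0, one_smul]
  have hrow : H * Hᵀ = (h:ℝ) • 1 := by
    have h2 := mul_eq_one_comm.mp hinvH
    calc H * Hᵀ = (h:ℝ) • (((h:ℝ)⁻¹ • H) * Hᵀ) := by
          rw [Matrix.smul_mul, smul_smul, mul_inv_cancel₀ hh0, one_smul]
      _ = (h:ℝ) • 1 := by rw [h2]
  have hHrow : ∀ l l' : Fin h, ∑ k, H l k * H l' k = if l = l' then (h:ℝ) else 0 := by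
    intro l l'
    have := congrFun (congrFun hrow l) l'
    simpa [Matrix.mul_apply, Matrix.transpose_apply, Matrix.smul_apply, Matrix.one_apply,
      mul_ite, mul_one, mul_zero] using this
  -- kronecker expansion
  have hkron : ∀ (l : Fin h) (j : Fin s),
      (H ⊗ₖ M₀).mulVec x (l, j) = ∑ k', H l k' * M₀.mulVec (fun i => x (k', i)) j := by
    intro l j
    rw [Matrix.mulVec, dotProduct, Fintype.sum_prod_type]
    refine Finset.sum_congr rfl fun k' _ => ?_
    rw [Matrix.mulVec, dotProduct, Finset.mul_sum]
    refine Finset.sum_congr rfl fun i _ => ?_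
    simp [Matrix.kroneckerMap_apply]
    ring
  -- deconstruction
  have hz : ∀ (k : Fin h) (j : Fin s),
      (h:ℝ)⁻¹ * ∑ l, H l k * y (l, j) = M₀.mulVec (fun i => x (k, i)) j + e k j := by
    intro k j
    have key : ∑ l, H l k * y (l, j)
        = (h:ℝ) * M₀.mulVec (fun i => x (k, i)) j + ∑ l, H l k * n (l, j) := by
      have hy' : ∀ l, y (l, j) = (H ⊗ₖ M₀).mulVec x (l, j) + n (l, j) := fun l => rfl
      simp only [hy', mul_add, Finset.sum_add_distrib]
      congr 1
      have h1 : ∑ l, H l k * (H ⊗ₖ M₀).mulVec x (l, j)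
          = ∑ k', (∑ l, H l k * H l k') * M₀.mulVec (fun i => x (k', i)) j := by
        simp only [hkron, Finset.mul_sum, Finset.sum_mul]
        rw [Finset.sum_comm]
        exact Finset.sum_congr rfl fun k' _ => Finset.sum_congr rfl fun l _ => by ring
      rw [h1]
      simp [hHcol, ite_mul, zero_mul]
    rw [key, he]
    field_simp
  -- good segment decoding
  have hgood : ∀ k : Fin h, (∑ j, (e k j) ^ 2) < 1/4 → ∀ i : Fin m,
      dec0 M₀ (fun j => (h:ℝ)⁻¹ * ∑ l, H l k * y (l, j)) i = x (k, i) := by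
    intro k hk i
    have hclose : ∑ j, (M₀.mulVec (fun i => x (k, i)) j
        - (fun j => (h:ℝ)⁻¹ * ∑ l, H l k * y (l, j)) j) ^ 2 < 1/4 := by
      have heq : ∀ j : Fin s, M₀.mulVec (fun i => x (k, i)) j
          - (h:ℝ)⁻¹ * (∑ l, H l k * y (l, j)) = -(e k j) := by
        intro j; rw [hz k j]; ring
      calc ∑ j, (M₀.mulVec (fun i => x (k, i)) j
            - (fun j => (h:ℝ)⁻¹ * ∑ l, H l k * y (l, j)) j) ^ 2
          = ∑ j, (e k j) ^ 2 := by
            refine Finset.sum_congr rfl fun j _ => ?_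
            rw [show (fun j => (h:ℝ)⁻¹ * ∑ l, H l k * y (l, j)) j
              = (h:ℝ)⁻¹ * ∑ l, H l k * y (l, j) from rfl, heq j, neg_sq]
        _ < 1/4 := hk
    have := dec0_close_eq M₀ hM₀ hinj (fun j => (h:ℝ)⁻¹ * ∑ l, H l k * y (l, j))
      (fun i => x (k, i)) (fun i => hx (k, i)) hclose
    exact congrFun this i
  -- energy bound
  have inner : ∀ (a : Fin h → ℝ), ∑ k, (∑ l, H l k * a l) ^ 2 = (h:ℝ) * ∑ l, (a l) ^ 2 := by
    intro a
    calc ∑ k, (∑ l, H l k * a l) ^ 2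
        = ∑ k, ∑ l, ∑ l', (H l k * a l) * (H l' k * a l') := by
          refine Finset.sum_congr rfl fun k _ => ?_
          rw [sq, Finset.sum_mul_sum]
      _ = ∑ l, ∑ l', (a l * a l') * ∑ k, H l k * H l' k := by
          rw [Finset.sum_comm]
          refine Finset.sum_congr rfl fun l _ => ?_
          rw [Finset.sum_comm]
          refine Finset.sum_congr rfl fun l' _ => ?_
          rw [Finset.mul_sum]
          exact Finset.sum_congr rfl fun k _ => by ring
      _ = ∑ l, (a l * a l) * (h:ℝ) := by
          refine Finset.sum_congr rfl fun l _ => ?_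
          simp [hHrow, mul_ite, mul_zero]
      _ = (h:ℝ) * ∑ l, (a l) ^ 2 := by
          rw [Finset.mul_sum]
          exact Finset.sum_congr rfl fun l _ => by ring
  have henergy : ∑ k, ∑ j, (e k j) ^ 2 = (h:ℝ)⁻¹ * ∑ p : Fin h × Fin s, (n p) ^ 2 := by
    have h1 : ∑ k, ∑ j, (e k j) ^ 2
        = ∑ j, ∑ k, ((h:ℝ)⁻¹ * ∑ l, H l k * n (l, j)) ^ 2 := by
      rw [Finset.sum_comm]
    have h2 : ∀ j : Fin s, ∑ k, ((h:ℝ)⁻¹ * ∑ l, H l k * n (l, j)) ^ 2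
        = (h:ℝ)⁻¹ * ∑ l, (n (l, j)) ^ 2 := by
      intro j
      simp only [mul_pow]
      rw [← Finset.mul_sum, inner (fun l => n (l, j))]
      field_simp
    rw [h1, Finset.sum_congr rfl fun j _ => h2 j, ← Finset.mul_sum, Fintype.sum_prod_type,
      Finset.sum_comm]
  -- bad set
  set Bad : Finset (Fin h) := univ.filter (fun k => ¬ (∑ j, (e k j) ^ 2 < 1/4)) with hBadDef
  have hsubset : (univ.filter fun p : Fin h × Fin m =>
      dec0 M₀ (fun j => (h:ℝ)⁻¹ * ∑ l, H l p.1 * y (l, j)) p.2 ≠ x p) ⊆ Bad ×ˢ univ := by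
    intro p hp
    simp only [Finset.mem_filter, Finset.mem_univ, true_and] at hp
    simp only [Finset.mem_product, hBadDef, Finset.mem_filter, Finset.mem_univ, true_and,
      and_true]
    intro hb
    exact hp (hgood p.1 hb p.2)
  have hcard : ((univ.filter fun p : Fin h × Fin m =>
      dec0 M₀ (fun j => (h:ℝ)⁻¹ * ∑ l, H l p.1 * y (l, j)) p.2 ≠ x p)).card ≤ Bad.card * m := by
    calc _ ≤ (Bad ×ˢ (univ : Finset (Fin m))).card := Finset.card_le_card hsubset
      _ = Bad.card * m := by rw [Finset.card_product, Finset.card_univ, Fintype.card_fin]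
  have hBadBound : (Bad.card : ℝ) * (1/4) ≤ ∑ k, ∑ j, (e k j) ^ 2 := by
    calc (Bad.card : ℝ) * (1/4) = Bad.card • (1/4 : ℝ) := by rw [nsmul_eq_mul]
      _ ≤ ∑ k ∈ Bad, ∑ j, (e k j) ^ 2 := Finset.card_nsmul_le_sum Bad _ _ (fun k hk => by
          simp only [hBadDef, Finset.mem_filter, Finset.mem_univ, true_and] at hk
          linarith [not_lt.mp hk])
      _ ≤ ∑ k, ∑ j, (e k j) ^ 2 := Finset.sum_le_sum_of_subset_of_nonneg
          (Finset.subset_univ _) (fun k _ _ => Finset.sum_nonneg fun j _ => sq_nonneg _)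
  have hn : (0:ℝ) ≤ ∑ p : Fin h × Fin s, (n p) ^ 2 :=
    Finset.sum_nonneg fun p _ => sq_nonneg _
  have hB : (Bad.card : ℝ) ≤ 4 * ((h:ℝ)⁻¹ * ∑ p : Fin h × Fin s, (n p) ^ 2) := by
    rw [← henergy]; linarith
  calc ((univ.filter fun p : Fin h × Fin m =>
        dec0 M₀ (fun j => (h:ℝ)⁻¹ * ∑ l, H l p.1 * y (l, j)) p.2 ≠ x p).card : ℝ)
      ≤ ((Bad.card * m : ℕ) : ℝ) := by exact_mod_cast hcard
    _ = (Bad.card : ℝ) * m := by push_cast; ring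
    _ ≤ (4 * ((h:ℝ)⁻¹ * ∑ p : Fin h × Fin s, (n p) ^ 2)) * m :=
        mul_le_mul_of_nonneg_right hB (Nat.cast_nonneg m)
    _ = 4 * m * (∑ j, (n j) ^ 2) / h := by field_simp
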